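/- For all real α ∈ [5, 100], there exists a constant C such that for all natural numbers n ≥ 1, |∑_{i=1}^n i^α − (n^(α+1)/(α+1) + n^α/2 + α·n^(α−1)/12)| ≤ C·n^(α−2). -/

import Mathlib

set_option maxHeartbeats 4000000

open Finset

lemma mvt_bound {f f' : ℝ → ℝ} {h C : ℝ} (h0 : 0 ≤ h)
    (hf : ∀ t ∈ Set.Icc (0:ℝ) h, HasDerivAt f (f' t) t)
    (hb : ∀ t ∈ Set.Icc (0:ℝ) h, |f' t| ≤ C) (hf0 : f 0 = 0) :
    |f h| ≤ C * h := by
  have := Convex.norm_image_sub_le_of_norm_hasDerivWithin_le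
    (fun t ht => (hf t ht).hasDerivWithinAt) (fun t ht => by simpa using hb t ht)
    (convex_Icc 0 h) (Set.left_mem_Icc.2 h0) (Set.right_mem_Icc.2 h0)
  simpa [hf0, abs_of_nonneg h0] using this

lemma lev0 {γ h : ℝ} (hγ : 1 ≤ γ) (h0 : 0 ≤ h) (h1 : h ≤ 1) :
    |(1 - h) ^ γ - 1| ≤ γ * h := by
  have hpos : (0:ℝ) ≤ 1 - h := by linarith
  have upper : (1 - h) ^ γ ≤ 1 := by
    calc (1-h)^γ ≤ 1 ^ γ := Real.rpow_le_rpow hpos (by linarith) (by linarith)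
    _ = 1 := Real.one_rpow γ
  have lower : 1 - γ * h ≤ (1 - h) ^ γ := by
    have := one_add_mul_self_le_rpow_one_add (s := -h) (by linarith) hγ
    calc 1 - γ * h = 1 + γ * (-h) := by ring
    _ ≤ (1 + -h) ^ γ := this
    _ = (1 - h) ^ γ := by ring_nf
  rw [abs_le]
  constructor <;> nlinarith

lemma deriv_one_sub_rpow {γ : ℝ} (hγ : 1 ≤ γ) (t : ℝ) :
    HasDerivAt (fun s => (1 - s) ^ γ) (-(γ * (1 - t) ^ (γ - 1))) t := by
  have inner : HasDerivAt (fun s : ℝ => 1 - s) (-1) t := by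
    simpa using (hasDerivAt_id t).const_sub 1
  have := (Real.hasDerivAt_rpow_const (p := γ) (Or.inr hγ)).comp t inner
  simpa [Function.comp_def, mul_comm, mul_neg] using this

lemma lev1 {γ h : ℝ} (hγ : 2 ≤ γ) (h0 : 0 ≤ h) (h1 : h ≤ 1) :
    |(1 - h) ^ γ - (1 - γ * h)| ≤ γ * (γ - 1) * h ^ 2 := by
  have key := mvt_bound (f := fun t => (1-t)^γ - (1 - γ*t))
    (f' := fun t => -(γ * (1-t)^(γ-1)) + γ) (C := γ * (γ-1) * h) h0 ?_ ?_ ?_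
  · calc |(1-h)^γ - (1 - γ*h)| ≤ γ * (γ-1) * h * h := key
    _ = γ * (γ-1) * h^2 := by ring
  · intro t ht
    have d1 := deriv_one_sub_rpow (by linarith : 1 ≤ γ) t
    have d2 : HasDerivAt (fun s : ℝ => 1 - γ * s) (-γ) t := by
      simpa using ((hasDerivAt_id t).const_mul γ).const_sub 1
    simpa [Pi.sub_def] using d1.sub d2
  · intro t ht
    obtain ⟨ht0, hth⟩ := ht
    have := lev0 (γ := γ - 1) (h := t) (by linarith) ht0 (by linarith)
    show |(-(γ * (1-t)^(γ-1)) + γ)| ≤ γ * (γ-1) * h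
    have e : -(γ * (1-t)^(γ-1)) + γ = γ * (1 - (1-t)^(γ-1)) := by ring
    rw [e, abs_mul, abs_of_nonneg (by linarith : (0:ℝ) ≤ γ), abs_sub_comm]
    have hcoef : (0:ℝ) ≤ γ * (γ-1) := by nlinarith
    calc γ * |(1-t)^(γ-1) - 1| ≤ γ * ((γ-1) * t) :=
          mul_le_mul_of_nonneg_left this (by linarith)
    _ ≤ γ * (γ-1) * h := by nlinarith [mul_le_mul_of_nonneg_left hth hcoef]
  · show (1-(0:ℝ))^γ - (1 - γ*0) = 0
    norm_num

lemma lev2 {γ h : ℝ} (hγ : 3 ≤ γ) (h0 : 0 ≤ h) (h1 : h ≤ 1) :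
    |(1 - h) ^ γ - (1 - γ * h + γ*(γ-1)/2 * h ^ 2)| ≤ γ * (γ-1) * (γ-2) * h ^ 3 := by
  have key := mvt_bound (f := fun t => (1-t)^γ - (1 - γ*t + γ*(γ-1)/2 * t^2))
    (f' := fun t => -(γ * (1-t)^(γ-1)) + γ - γ*(γ-1)*t)
    (C := γ * (γ-1) * (γ-2) * h^2) h0 ?_ ?_ ?_
  · calc |(1-h)^γ - (1 - γ*h + γ*(γ-1)/2 * h^2)| ≤ γ*(γ-1)*(γ-2)*h^2 * h := key
    _ = γ*(γ-1)*(γ-2)*h^3 := by ring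
  · intro t ht
    have d1 := deriv_one_sub_rpow (by linarith : 1 ≤ γ) t
    have d2 : HasDerivAt (fun s : ℝ => 1 - γ*s + γ*(γ-1)/2 * s^2)
        (-γ + γ*(γ-1)/2 * (2*t)) t := by
      have a1 : HasDerivAt (fun s : ℝ => 1 - γ * s) (-γ) t := by
        simpa using ((hasDerivAt_id t).const_mul γ).const_sub 1
      have a2 : HasDerivAt (fun s : ℝ => γ*(γ-1)/2 * s^2) (γ*(γ-1)/2 * (2*t)) t := by
        have := (hasDerivAt_pow 2 t).const_mul (γ*(γ-1)/2)
        simpa [mul_comm] using this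
      simpa [Pi.add_def] using a1.add a2
    have := d1.sub d2
    simp only [Pi.sub_def] at this
    refine this.congr_deriv ?_
    ring
  · intro t ht
    obtain ⟨ht0, hth⟩ := ht
    have prev := lev1 (γ := γ - 1) (h := t) (by linarith) ht0 (by linarith)
    show |(-(γ * (1-t)^(γ-1)) + γ - γ*(γ-1)*t)| ≤ γ*(γ-1)*(γ-2)*h^2
    have e : -(γ * (1-t)^(γ-1)) + γ - γ*(γ-1)*t
        = -(γ * ((1-t)^(γ-1) - (1 - (γ-1)*t))) := by ring
    rw [e, abs_neg, abs_mul, abs_of_nonneg (by linarith : (0:ℝ) ≤ γ)]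
    have ht2 : t^2 ≤ h^2 := pow_le_pow_left₀ ht0 hth 2
    have hcoef : (0:ℝ) ≤ γ * ((γ-1)*(γ-2)) :=
      mul_nonneg (by linarith) (mul_nonneg (by linarith) (by linarith))
    calc γ * |(1-t)^(γ-1) - (1 - (γ-1)*t)| ≤ γ * ((γ-1)*(γ-1-1) * t^2) :=
          mul_le_mul_of_nonneg_left prev (by linarith)
    _ ≤ γ*(γ-1)*(γ-2)*h^2 := by nlinarith [mul_le_mul_of_nonneg_left ht2 hcoef]
  · show (1-(0:ℝ))^γ - (1 - γ*0 + γ*(γ-1)/2 * 0^2) = 0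
    norm_num

lemma lev3 {γ h : ℝ} (hγ : 4 ≤ γ) (h0 : 0 ≤ h) (h1 : h ≤ 1) :
    |(1 - h) ^ γ - (1 - γ * h + γ*(γ-1)/2 * h ^ 2 - γ*(γ-1)*(γ-2)/6 * h ^ 3)|
      ≤ γ * (γ-1) * (γ-2) * (γ-3) * h ^ 4 := by
  have key := mvt_bound
    (f := fun t => (1-t)^γ - (1 - γ*t + γ*(γ-1)/2 * t^2 - γ*(γ-1)*(γ-2)/6 * t^3))
    (f' := fun t => -(γ * (1-t)^(γ-1)) + γ - γ*(γ-1)*t + γ*(γ-1)*(γ-2)/2 * t^2)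
    (C := γ * (γ-1) * (γ-2) * (γ-3) * h^3) h0 ?_ ?_ ?_
  · calc |(1-h)^γ - (1 - γ*h + γ*(γ-1)/2 * h^2 - γ*(γ-1)*(γ-2)/6 * h^3)|
        ≤ γ*(γ-1)*(γ-2)*(γ-3)*h^3 * h := key
    _ = γ*(γ-1)*(γ-2)*(γ-3)*h^4 := by ring
  · intro t ht
    have d1 := deriv_one_sub_rpow (by linarith : 1 ≤ γ) t
    have d2 : HasDerivAt (fun s : ℝ => 1 - γ*s + γ*(γ-1)/2 * s^2 - γ*(γ-1)*(γ-2)/6 * s^3)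
        (-γ + γ*(γ-1)/2 * (2*t) - γ*(γ-1)*(γ-2)/6 * (3*t^2)) t := by
      have a1 : HasDerivAt (fun s : ℝ => 1 - γ * s) (-γ) t := by
        simpa using ((hasDerivAt_id t).const_mul γ).const_sub 1
      have a2 : HasDerivAt (fun s : ℝ => γ*(γ-1)/2 * s^2) (γ*(γ-1)/2 * (2*t)) t := by
        have := (hasDerivAt_pow 2 t).const_mul (γ*(γ-1)/2)
        simpa [mul_comm] using this
      have a3 : HasDerivAt (fun s : ℝ => γ*(γ-1)*(γ-2)/6 * s^3)
          (γ*(γ-1)*(γ-2)/6 * (3*t^2)) t := by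
        have := (hasDerivAt_pow 3 t).const_mul (γ*(γ-1)*(γ-2)/6)
        simpa [mul_comm] using this
      simpa [Pi.add_def, Pi.sub_def] using (a1.add a2).sub a3
    have := d1.sub d2
    simp only [Pi.sub_def] at this
    refine this.congr_deriv ?_
    ring
  · intro t ht
    obtain ⟨ht0, hth⟩ := ht
    have prev := lev2 (γ := γ - 1) (h := t) (by linarith) ht0 (by linarith)
    show |(-(γ * (1-t)^(γ-1)) + γ - γ*(γ-1)*t + γ*(γ-1)*(γ-2)/2 * t^2)|
        ≤ γ*(γ-1)*(γ-2)*(γ-3)*h^3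
    have e : -(γ * (1-t)^(γ-1)) + γ - γ*(γ-1)*t + γ*(γ-1)*(γ-2)/2 * t^2
        = -(γ * ((1-t)^(γ-1) - (1 - (γ-1)*t + (γ-1)*(γ-1-1)/2 * t^2))) := by ring
    rw [e, abs_neg, abs_mul, abs_of_nonneg (by linarith : (0:ℝ) ≤ γ)]
    have ht3 : t^3 ≤ h^3 := pow_le_pow_left₀ ht0 hth 3
    have hcoef : (0:ℝ) ≤ γ * ((γ-1)*(γ-2)*(γ-3)) :=
      mul_nonneg (by linarith) (mul_nonneg (mul_nonneg (by linarith) (by linarith)) (by linarith))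
    calc γ * |(1-t)^(γ-1) - (1 - (γ-1)*t + (γ-1)*(γ-1-1)/2 * t^2)|
        ≤ γ * ((γ-1)*(γ-1-1)*(γ-1-2) * t^3) :=
          mul_le_mul_of_nonneg_left prev (by linarith)
    _ ≤ γ*(γ-1)*(γ-2)*(γ-3)*h^3 := by nlinarith [mul_le_mul_of_nonneg_left ht3 hcoef]
  · show (1-(0:ℝ))^γ - (1 - γ*0 + γ*(γ-1)/2 * 0^2 - γ*(γ-1)*(γ-2)/6 * 0^3) = 0
    norm_num

lemma step_bound (α : ℝ) (h5 : 5 ≤ α) (h100 : α ≤ 100) (x : ℝ) (hx : 1 ≤ x) :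
    |(x^(α+1)/(α+1) + x^α/2 + α*x^(α-1)/12)
      - ((x-1)^(α+1)/(α+1) + (x-1)^α/2 + α*(x-1)^(α-1)/12) - x^α|
    ≤ (10^10 : ℝ) * x^(α-3) := by
  have hx0 : (0:ℝ) < x := by linarith
  set h : ℝ := 1/x with hh
  have hh0 : 0 ≤ h := by positivity
  have hh1 : h ≤ 1 := by rw [hh, div_le_one hx0]; linarith
  have hxh : x * h = 1 := by rw [hh]; field_simp
  have h1h : (0:ℝ) ≤ 1 - h := by linarith
  -- split rpow into x^(α-3) * x^m
  have esplit : ∀ (c : ℝ) (m : ℕ), α - 3 + (m:ℝ) = c → x ^ c = x^(α-3) * x^(m:ℕ) := by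
    intro c m hc
    rw [← hc, Real.rpow_add hx0, Real.rpow_natCast]
  have e1 : x ^ (α+1) = x^(α-3) * x^4 := esplit (α+1) 4 (by push_cast; ring)
  have e2 : x ^ α = x^(α-3) * x^3 := esplit α 3 (by push_cast; ring)
  have e3 : x ^ (α-1) = x^(α-3) * x^2 := esplit (α-1) 2 (by push_cast; ring)
  have pow_eq : ∀ β : ℝ, (x-1)^β = x^β * (1-h)^β := by
    intro β
    rw [show x - 1 = x * (1 - h) by rw [hh]; field_simp, Real.mul_rpow hx0.le h1h]
  set A := x^(α-3) with hA
  have hA1 : (1:ℝ) ≤ A := Real.one_le_rpow hx (by linarith)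
  have hA0 : (0:ℝ) ≤ A := by linarith
  -- errors
  set E1 := (1-h)^(α+1) - (1 - (α+1)*h + (α+1)*((α+1)-1)/2 * h^2
      - (α+1)*((α+1)-1)*((α+1)-2)/6 * h^3) with hE1
  set E2 := (1-h)^α - (1 - α*h + α*(α-1)/2 * h^2 - α*(α-1)*(α-2)/6 * h^3) with hE2
  set E3 := (1-h)^(α-1) - (1 - (α-1)*h + (α-1)*((α-1)-1)/2 * h^2
      - (α-1)*((α-1)-1)*((α-1)-2)/6 * h^3) with hE3
  have b1 : |E1| ≤ (α+1)*α*(α-1)*(α-2) * h^4 := by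
    have := lev3 (γ := α+1) (h := h) (by linarith) hh0 hh1
    calc |E1| ≤ (α+1)*((α+1)-1)*((α+1)-2)*((α+1)-3) * h^4 := this
    _ = (α+1)*α*(α-1)*(α-2) * h^4 := by ring
  have b2 : |E2| ≤ α*(α-1)*(α-2)*(α-3) * h^4 :=
    lev3 (γ := α) (h := h) (by linarith) hh0 hh1
  have b3 : |E3| ≤ (α-1)*(α-2)*(α-3)*(α-4) * h^4 := by
    have := lev3 (γ := α-1) (h := h) (by linarith) hh0 hh1
    calc |E3| ≤ (α-1)*((α-1)-1)*((α-1)-2)*((α-1)-3) * h^4 := this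
    _ = (α-1)*(α-2)*(α-3)*(α-4) * h^4 := by ring
  -- key algebraic identity
  have key : (x^(α+1)/(α+1) + x^α/2 + α*x^(α-1)/12)
      - ((x-1)^(α+1)/(α+1) + (x-1)^α/2 + α*(x-1)^(α-1)/12) - x^α
      = A * (α*(α-1)*(α-2)/24 + α*(α-1)*(α-2)*(α-3)*h/72)
        - A*x^4*E1/(α+1) - A*x^3*E2/2 - α*A*x^2*E3/12 := by
    rw [pow_eq (α+1), pow_eq α, pow_eq (α-1), e1, e2, e3, hE1, hE2, hE3, hh]
    have hxne : x ≠ 0 := ne_of_gt hx0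
    have hane : α + 1 ≠ 0 := by linarith
    field_simp
    ring
  rw [key]
  have hxh4 : x^4*h^4 = 1 := by rw [← mul_pow, hxh]; norm_num
  have hxh3 : x^3*h^3 = 1 := by rw [← mul_pow, hxh]; norm_num
  have hxh2 : x^2*h^2 = 1 := by rw [← mul_pow, hxh]; norm_num
  have hane : α + 1 ≠ 0 := by linarith
  have hxp4 : (0:ℝ) < x^4 := by positivity
  have hxp3 : (0:ℝ) < x^3 := by positivity
  have hxp2 : (0:ℝ) < x^2 := by positivity
  -- numeric product bounds
  have m2 : α*(α-1) ≤ 100*100 := mul_le_mul (by linarith) (by linarith) (by linarith) (by norm_num)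
  have m3 : α*(α-1)*(α-2) ≤ 100*100*100 :=
    mul_le_mul m2 (by linarith) (by linarith) (by norm_num)
  have m4 : α*(α-1)*(α-2)*(α-3) ≤ 100*100*100*100 :=
    mul_le_mul m3 (by linarith) (by linarith) (by norm_num)
  have m4' : (α-1)*(α-2)*(α-3)*(α-4) ≤ 100*100*100*100 :=
    mul_le_mul (mul_le_mul (mul_le_mul (by linarith) (by linarith) (by linarith) (by norm_num))
      (by linarith) (by linarith) (by norm_num)) (by linarith) (by linarith) (by norm_num)
  have p3nn : (0:ℝ) ≤ α*(α-1)*(α-2) :=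
    mul_nonneg (mul_nonneg (by linarith) (by linarith)) (by linarith)
  have p4nn : (0:ℝ) ≤ α*(α-1)*(α-2)*(α-3) := mul_nonneg p3nn (by linarith)
  have q4nn : (0:ℝ) ≤ (α-1)*(α-2)*(α-3)*(α-4) :=
    mul_nonneg (mul_nonneg (mul_nonneg (by linarith) (by linarith)) (by linarith)) (by linarith)
  have m5' : α*((α-1)*(α-2)*(α-3)*(α-4)) ≤ 100*(100*100*100*100) :=
    mul_le_mul (by linarith) m4' q4nn (by norm_num)
  -- individual term bounds
  have hT0 : |A * (α*(α-1)*(α-2)/24 + α*(α-1)*(α-2)*(α-3)*h/72)|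
      ≤ A * (α*(α-1)*(α-2)/24 + α*(α-1)*(α-2)*(α-3)/72) := by
    rw [abs_of_nonneg (by
      apply mul_nonneg hA0
      have : (0:ℝ) ≤ α*(α-1)*(α-2)*(α-3)*h := mul_nonneg p4nn hh0
      linarith)]
    have h1 : α*(α-1)*(α-2)*(α-3)*h ≤ α*(α-1)*(α-2)*(α-3) := by
      nlinarith [mul_le_mul_of_nonneg_left hh1 p4nn]
    nlinarith [mul_le_mul_of_nonneg_left h1 hA0]
  have hT1 : |A*x^4*E1/(α+1)| ≤ A * (α*(α-1)*(α-2)) := by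
    have e : |A*x^4*E1/(α+1)| = A*x^4/(α+1) * |E1| := by
      rw [abs_div, abs_mul, abs_mul, abs_of_nonneg hA0, abs_of_nonneg hxp4.le,
        abs_of_nonneg (by linarith : (0:ℝ) ≤ α+1)]
      ring
    calc |A*x^4*E1/(α+1)| = A*x^4/(α+1) * |E1| := e
    _ ≤ A*x^4/(α+1) * ((α+1)*α*(α-1)*(α-2)*h^4) :=
        mul_le_mul_of_nonneg_left b1 (by positivity)
    _ = A*(α*(α-1)*(α-2))*(x^4*h^4)*((α+1)/(α+1)) := by ring
    _ = A*(α*(α-1)*(α-2)) := by rw [hxh4, div_self hane]; ring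
  have hT2 : |A*x^3*E2/2| ≤ A * (α*(α-1)*(α-2)*(α-3)/2) := by
    have e : |A*x^3*E2/2| = A*x^3/2 * |E2| := by
      rw [abs_div, abs_mul, abs_mul, abs_of_nonneg hA0, abs_of_nonneg hxp3.le]
      norm_num; ring
    calc |A*x^3*E2/2| = A*x^3/2 * |E2| := e
    _ ≤ A*x^3/2 * (α*(α-1)*(α-2)*(α-3)*h^4) :=
        mul_le_mul_of_nonneg_left b2 (by positivity)
    _ = A*(α*(α-1)*(α-2)*(α-3)/2)*(x^3*h^3)*h := by ring
    _ = A*(α*(α-1)*(α-2)*(α-3)/2)*h := by rw [hxh3]; ring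
    _ ≤ A*(α*(α-1)*(α-2)*(α-3)/2) := by
        nlinarith [mul_le_mul_of_nonneg_left hh1 (mul_nonneg hA0 (by linarith : (0:ℝ) ≤ α*(α-1)*(α-2)*(α-3)/2))]
  have hT3 : |α*A*x^2*E3/12| ≤ A * (α*((α-1)*(α-2)*(α-3)*(α-4))/12) := by
    have e : |α*A*x^2*E3/12| = α*A*x^2/12 * |E3| := by
      rw [abs_div, abs_mul, abs_mul, abs_mul, abs_of_nonneg (by linarith : (0:ℝ) ≤ α),
        abs_of_nonneg hA0, abs_of_nonneg hxp2.le]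
      norm_num; ring
    calc |α*A*x^2*E3/12| = α*A*x^2/12 * |E3| := e
    _ ≤ α*A*x^2/12 * ((α-1)*(α-2)*(α-3)*(α-4)*h^4) :=
        mul_le_mul_of_nonneg_left b3 (by positivity)
    _ = A*(α*((α-1)*(α-2)*(α-3)*(α-4))/12)*(x^2*h^2)*h^2 := by ring
    _ = A*(α*((α-1)*(α-2)*(α-3)*(α-4))/12)*h^2 := by rw [hxh2]; ring
    _ ≤ A*(α*((α-1)*(α-2)*(α-3)*(α-4))/12) := by
        have hh2 : h^2 ≤ 1 := by nlinarith
        nlinarith [mul_le_mul_of_nonneg_left hh2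
          (mul_nonneg hA0 (by nlinarith : (0:ℝ) ≤ α*((α-1)*(α-2)*(α-3)*(α-4))/12))]
  have tri : |A * (α*(α-1)*(α-2)/24 + α*(α-1)*(α-2)*(α-3)*h/72)
        - A*x^4*E1/(α+1) - A*x^3*E2/2 - α*A*x^2*E3/12|
      ≤ |A * (α*(α-1)*(α-2)/24 + α*(α-1)*(α-2)*(α-3)*h/72)|
        + |A*x^4*E1/(α+1)| + |A*x^3*E2/2| + |α*A*x^2*E3/12| := by
    calc |A * (α*(α-1)*(α-2)/24 + α*(α-1)*(α-2)*(α-3)*h/72)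
        - A*x^4*E1/(α+1) - A*x^3*E2/2 - α*A*x^2*E3/12|
        ≤ |A * (α*(α-1)*(α-2)/24 + α*(α-1)*(α-2)*(α-3)*h/72)
            - A*x^4*E1/(α+1) - A*x^3*E2/2| + |α*A*x^2*E3/12| := abs_sub _ _
    _ ≤ |A * (α*(α-1)*(α-2)/24 + α*(α-1)*(α-2)*(α-3)*h/72)
            - A*x^4*E1/(α+1)| + |A*x^3*E2/2| + |α*A*x^2*E3/12| := by
          have := abs_sub (A * (α*(α-1)*(α-2)/24 + α*(α-1)*(α-2)*(α-3)*h/72)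
            - A*x^4*E1/(α+1)) (A*x^3*E2/2)
          linarith
    _ ≤ _ := by
          have := abs_sub (A * (α*(α-1)*(α-2)/24 + α*(α-1)*(α-2)*(α-3)*h/72))
            (A*x^4*E1/(α+1))
          linarith
  have hS : α*(α-1)*(α-2)/24 + α*(α-1)*(α-2)*(α-3)/72 + α*(α-1)*(α-2)
      + α*(α-1)*(α-2)*(α-3)/2 + α*((α-1)*(α-2)*(α-3)*(α-4))/12 ≤ 10^10 := by
    norm_num; nlinarith
  calc |A * (α*(α-1)*(α-2)/24 + α*(α-1)*(α-2)*(α-3)*h/72)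
        - A*x^4*E1/(α+1) - A*x^3*E2/2 - α*A*x^2*E3/12|
      ≤ A * (α*(α-1)*(α-2)/24 + α*(α-1)*(α-2)*(α-3)/72) + A * (α*(α-1)*(α-2))
        + A * (α*(α-1)*(α-2)*(α-3)/2) + A * (α*((α-1)*(α-2)*(α-3)*(α-4))/12) := by
        linarith [tri, hT0, hT1, hT2, hT3]
  _ = A * (α*(α-1)*(α-2)/24 + α*(α-1)*(α-2)*(α-3)/72 + α*(α-1)*(α-2)
        + α*(α-1)*(α-2)*(α-3)/2 + α*((α-1)*(α-2)*(α-3)*(α-4))/12) := by ring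
  _ ≤ A * 10^10 := mul_le_mul_of_nonneg_left hS hA0
  _ = 10^10 * A := by ring

theorem faulhaber_third_order (α : ℝ) (hα : α ∈ Set.Icc (5:ℝ) 100) :
    ∃ C : ℝ, ∀ n : ℕ, 1 ≤ n →
      |(∑ i ∈ Finset.Icc 1 n, (i : ℝ) ^ α)
          - ((n : ℝ) ^ (α + 1) / (α + 1) + (n : ℝ) ^ α / 2 + α * (n : ℝ) ^ (α - 1) / 12)|
        ≤ C * (n : ℝ) ^ (α - 2) := by
  obtain ⟨h5, h100⟩ := hα
  set g : ℕ → ℝ := fun n => (n : ℝ) ^ (α + 1) / (α + 1) + (n : ℝ) ^ α / 2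
      + α * (n : ℝ) ^ (α - 1) / 12 with hg
  set Er : ℕ → ℝ := fun n => (∑ i ∈ Finset.Icc 1 n, (i : ℝ) ^ α) - g n with hEr
  have main : ∀ n : ℕ, 1 ≤ n → |Er n| ≤ |Er 1| + 10^10 * ((n:ℝ)-1) * (n:ℝ)^(α-3) := by
    intro n hn
    induction n, hn using Nat.le_induction with
    | base => norm_num
    | succ n hn ih =>
      have hnp : (0:ℝ) < (n:ℝ) := by exact_mod_cast hn
      have hn1 : (1:ℝ) ≤ (n:ℝ) := by exact_mod_cast hn
      have hx : (1:ℝ) ≤ ((n+1:ℕ):ℝ) := by push_cast; linarith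
      have hsb := step_bound α h5 h100 ((n+1:ℕ):ℝ) hx
      have hsub1 : ((n+1:ℕ):ℝ) - 1 = (n:ℝ) := by push_cast; ring
      rw [hsub1] at hsb
      have hsum : (∑ i ∈ Finset.Icc 1 (n+1), (i : ℝ) ^ α)
          = (∑ i ∈ Finset.Icc 1 n, (i : ℝ) ^ α) + ((n+1:ℕ):ℝ)^α :=
        Finset.sum_Icc_succ_top (by omega) _
      have hEeq : Er (n+1) = Er n - ((g (n+1) - g n) - ((n+1:ℕ):ℝ)^α) := by
        simp only [hEr, hsum]; ring
      have hstep : |(g (n+1) - g n) - ((n+1:ℕ):ℝ)^α| ≤ 10^10 * ((n+1:ℕ):ℝ)^(α-3) := by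
        have : g (n+1) - g n - ((n+1:ℕ):ℝ)^α
            = (((n+1:ℕ):ℝ)^(α+1)/(α+1) + ((n+1:ℕ):ℝ)^α/2 + α*((n+1:ℕ):ℝ)^(α-1)/12)
              - ((n:ℝ)^(α+1)/(α+1) + (n:ℝ)^α/2 + α*(n:ℝ)^(α-1)/12) - ((n+1:ℕ):ℝ)^α := by
          simp only [hg]
          try ring
        rw [this]
        exact hsb
      have hmono : (n:ℝ)^(α-3) ≤ ((n+1:ℕ):ℝ)^(α-3) :=
        Real.rpow_le_rpow hnp.le (by push_cast; linarith) (by linarith)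
      have hpow0 : (0:ℝ) ≤ ((n+1:ℕ):ℝ)^(α-3) := Real.rpow_nonneg (by positivity) _
      calc |Er (n+1)| = |Er n - ((g (n+1) - g n) - ((n+1:ℕ):ℝ)^α)| := by rw [hEeq]
      _ ≤ |Er n| + |(g (n+1) - g n) - ((n+1:ℕ):ℝ)^α| := abs_sub _ _
      _ ≤ (|Er 1| + 10^10 * ((n:ℝ)-1) * (n:ℝ)^(α-3)) + 10^10 * ((n+1:ℕ):ℝ)^(α-3) := by
            linarith
      _ ≤ |Er 1| + 10^10 * (((n+1:ℕ):ℝ)-1) * ((n+1:ℕ):ℝ)^(α-3) := by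
            push_cast at hmono hpow0 ⊢
            nlinarith [mul_le_mul_of_nonneg_left hmono
              (show (0:ℝ) ≤ 10^10 * ((n:ℝ)-1) by nlinarith [hn1])]
  refine ⟨|Er 1| + 10^10, fun n hn => ?_⟩
  have hnp : (0:ℝ) < (n:ℝ) := by exact_mod_cast hn
  have hn1 : (1:ℝ) ≤ (n:ℝ) := by exact_mod_cast hn
  have h1 := main n hn
  have hpow1 : (1:ℝ) ≤ (n:ℝ)^(α-2) := Real.one_le_rpow hn1 (by linarith)
  have hsplit : (n:ℝ)^(α-2) = (n:ℝ) * (n:ℝ)^(α-3) := by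
    rw [show α - 2 = 1 + (α-3) by ring, Real.rpow_add hnp, Real.rpow_one]
  have hpow3 : (0:ℝ) ≤ (n:ℝ)^(α-3) := Real.rpow_nonneg hnp.le _
  have h2 : ((n:ℝ)-1) * (n:ℝ)^(α-3) ≤ (n:ℝ)^(α-2) := by
    rw [hsplit]; nlinarith
  have hE1 : (0:ℝ) ≤ |Er 1| := abs_nonneg _
  calc |(∑ i ∈ Finset.Icc 1 n, (i : ℝ) ^ α)
          - ((n : ℝ) ^ (α + 1) / (α + 1) + (n : ℝ) ^ α / 2 + α * (n : ℝ) ^ (α - 1) / 12)|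
      = |Er n| := rfl
  _ ≤ |Er 1| + 10^10 * ((n:ℝ)-1) * (n:ℝ)^(α-3) := h1
  _ ≤ |Er 1| * (n:ℝ)^(α-2) + 10^10 * (n:ℝ)^(α-2) := by
      nlinarith [mul_le_mul_of_nonneg_left hpow1 hE1]
  _ = (|Er 1| + 10^10) * (n:ℝ)^(α-2) := by ring
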